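/- If f, g ∈ ℂ(q) are each zero or reduced rational functions with poles only at roots of unity, then the sum over all roots of unity ζ of the residues Res_ζ (σ(f)·g·q⁻¹) equals 0 (the sum is finite, since only finitely many of these residues are nonzero). Thus the subspace of reduced rational functions with poles only at roots of unity is isotropic for the residue pairing ω. -/

import Mathlib

open Polynomial

noncomputable section

/-- A complex number is a root of unity if some positive power of it equals `1`. -/
def IsRootOfUnity (ζ : ℂ) : Prop := ∃ n : ℕ, 0 < n ∧ ζ ^ n = 1

/-- A rational function `f ∈ ℂ(q)` is zero or a reduced rational function with poles only at
roots of unity. -/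
def ReducedPolesOnlyAtRootsOfUnity (f : RatFunc ℂ) : Prop :=
  ∃ a b : ℂ[X], a.degree < b.degree ∧ (∀ ζ : ℂ, b.IsRoot ζ → IsRootOfUnity ζ) ∧
    f = algebraMap ℂ[X] (RatFunc ℂ) a / algebraMap ℂ[X] (RatFunc ℂ) b

/-- The residue of a rational function `f ∈ ℂ(q)` at a point `ζ`. -/
def residue (ζ : ℂ) (f : RatFunc ℂ) : ℂ :=
  (open scoped RatFunc in algebraMap (RatFunc ℂ) (LaurentSeries ℂ) (RatFunc.laurent ζ f)).coeff (-1 : ℤ)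

/-- The residue pairing `ω(f, g) = Σ_{ζ root of unity} Res_ζ (σ(f) · g · q⁻¹)`. -/
def omegaPair (σ : RatFunc ℂ → RatFunc ℂ) (f g : RatFunc ℂ) : ℂ :=
  ∑ᶠ ζ ∈ {z : ℂ | IsRootOfUnity z}, residue ζ (σ f * g * (RatFunc.X : RatFunc ℂ)⁻¹)

namespace OmegaAux

/-! ### Basic facts about residues -/

lemma coeff_neg_one_ofPowerSeries (s : PowerSeries ℂ) :
    (HahnSeries.ofPowerSeries ℤ ℂ s).coeff (-1) = 0 := by
  rw [HahnSeries.ofPowerSeries_apply, HahnSeries.embDomain_notin_range]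
  rintro ⟨n, hn⟩
  simp at hn

lemma coe_poly (p : ℂ[X]) : ((algebraMap ℂ[X] (RatFunc ℂ) p : RatFunc ℂ) : LaurentSeries ℂ)
    = HahnSeries.ofPowerSeries ℤ ℂ (p : PowerSeries ℂ) :=
  (RatFunc.coe_coe p).symm

lemma coe_ratio (p q : ℂ[X]) (h : q.eval 0 ≠ 0) :
    ((algebraMap ℂ[X] (RatFunc ℂ) p / algebraMap ℂ[X] (RatFunc ℂ) q : RatFunc ℂ) :
      LaurentSeries ℂ).coeff (-1) = 0 := by
  have hq : (q : PowerSeries ℂ) * ((q : PowerSeries ℂ))⁻¹ = 1 := by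
    apply PowerSeries.mul_inv_cancel
    rw [← Polynomial.coeff_zero_eq_eval_zero] at h
    rw [← PowerSeries.coeff_zero_eq_constantCoeff_apply, Polynomial.coeff_coe]
    exact h
  have hinv : ((algebraMap ℂ[X] (RatFunc ℂ) q : RatFunc ℂ) : LaurentSeries ℂ)⁻¹
      = HahnSeries.ofPowerSeries ℤ ℂ ((q : PowerSeries ℂ))⁻¹ := by
    rw [coe_poly]
    apply inv_eq_of_mul_eq_one_right
    rw [← map_mul, hq, map_one]
  rw [map_div₀, div_eq_mul_inv, hinv, coe_poly, ← map_mul, coeff_neg_one_ofPowerSeries]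

lemma residue_def' (ξ : ℂ) (h : RatFunc ℂ) :
    residue ξ h = ((RatFunc.laurent ξ h : RatFunc ℂ) : LaurentSeries ℂ).coeff (-1) := rfl

lemma residue_eq_zero_of_eval_ne (p q : ℂ[X]) (ξ : ℂ) (hq : q.eval ξ ≠ 0) :
    residue ξ (algebraMap ℂ[X] (RatFunc ℂ) p / algebraMap ℂ[X] (RatFunc ℂ) q) = 0 := by
  rw [residue_def', map_div₀, RatFunc.laurent_algebraMap, RatFunc.laurent_algebraMap]
  apply coe_ratio
  rwa [← Polynomial.coeff_zero_eq_eval_zero, Polynomial.taylor_coeff_zero]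

lemma residue_zero (ξ : ℂ) : residue ξ (0 : RatFunc ℂ) = 0 := by
  rw [residue_def', map_zero, map_zero, HahnSeries.coeff_zero]

lemma residue_add (ξ : ℂ) (x y : RatFunc ℂ) :
    residue ξ (x + y) = residue ξ x + residue ξ y := by
  rw [residue_def', residue_def', residue_def', map_add, map_add, HahnSeries.coeff_add]

lemma residue_eq_zero_of_not_root_denom (h : RatFunc ℂ) (ξ : ℂ) (hξ : ¬ h.denom.IsRoot ξ) :
    residue ξ h = 0 := by
  rw [← RatFunc.num_div_denom h]
  exact residue_eq_zero_of_eval_ne _ _ _ hξ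

lemma residue_support_finite (h : RatFunc ℂ) :
    (Function.support fun ζ => residue ζ h).Finite := by
  apply Set.Finite.subset (Polynomial.finite_setOf_isRoot (p := h.denom) (RatFunc.denom_ne_zero h))
  intro ξ hξ
  by_contra hroot
  exact hξ (residue_eq_zero_of_not_root_denom h ξ hroot)

/-! ### The total residue over roots of unity -/

def totRes (h : RatFunc ℂ) : ℂ := ∑ᶠ ζ ∈ {z : ℂ | IsRootOfUnity z}, residue ζ h

lemma totRes_zero : totRes 0 = 0 := by
  unfold totRes
  have : (fun ζ : ℂ => residue ζ (0 : RatFunc ℂ)) = fun _ => (0 : ℂ) := by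
    funext ζ; exact residue_zero ζ
  rw [finsum_mem_def]
  simp [this]

lemma totRes_add (x y : RatFunc ℂ) : totRes (x + y) = totRes x + totRes y := by
  unfold totRes
  rw [finsum_mem_def, finsum_mem_def, finsum_mem_def]
  have h1 : (Function.support (Set.indicator {z : ℂ | IsRootOfUnity z}
      fun ζ => residue ζ x)).Finite :=
    (residue_support_finite x).subset (fun a ha => by
      simp only [Function.mem_support] at ha ⊢
      intro h0; exact ha (Set.indicator_apply_eq_zero.mpr fun _ => h0))
  have h2 : (Function.support (Set.indicator {z : ℂ | IsRootOfUnity z}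
      fun ζ => residue ζ y)).Finite :=
    (residue_support_finite y).subset (fun a ha => by
      simp only [Function.mem_support] at ha ⊢
      intro h0; exact ha (Set.indicator_apply_eq_zero.mpr fun _ => h0))
  rw [← finsum_add_distrib h1 h2]
  congr 1
  funext ζ
  by_cases hζ : ζ ∈ {z : ℂ | IsRootOfUnity z} <;>
    simp [Set.indicator_apply, hζ, residue_add]

/-! ### Residues of basic partial-fraction terms -/

lemma laurent_term (γ ζ : ℂ) (m : ℕ) :
    RatFunc.laurent ζ (RatFunc.C γ *
      ((algebraMap ℂ[X] (RatFunc ℂ) (X - C ζ))⁻¹) ^ m) =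
      RatFunc.C γ * ((RatFunc.X : RatFunc ℂ)⁻¹) ^ m := by
  rw [map_mul, map_pow, map_inv₀, RatFunc.laurent_algebraMap, RatFunc.laurent_C]
  congr 3
  rw [map_sub, Polynomial.taylor_X, Polynomial.taylor_C, add_sub_cancel_right,
    RatFunc.algebraMap_X]

lemma coe_term (γ : ℂ) (m : ℕ) :
    ((RatFunc.C γ * ((RatFunc.X : RatFunc ℂ)⁻¹) ^ m : RatFunc ℂ) : LaurentSeries ℂ)
      = HahnSeries.single (-(m : ℤ)) γ := by
  rw [map_mul, map_pow,
    show ((RatFunc.X⁻¹ : RatFunc ℂ) : LaurentSeries ℂ)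
        = (((RatFunc.X : RatFunc ℂ) : LaurentSeries ℂ))⁻¹ from (open scoped RatFunc in map_inv₀ (algebraMap (RatFunc ℂ) (LaurentSeries ℂ)) _),
    RatFunc.coe_X, show ((RatFunc.C γ : RatFunc ℂ) : LaurentSeries ℂ) = HahnSeries.C γ by
      rw [← RatFunc.algebraMap_C, coe_poly, Polynomial.coe_C, HahnSeries.ofPowerSeries_C]]
  have hinv : (HahnSeries.single (1 : ℤ) (1 : ℂ))⁻¹ = HahnSeries.single (-1 : ℤ) (1 : ℂ) := by
    apply inv_eq_of_mul_eq_one_right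
    rw [HahnSeries.single_mul_single]
    norm_num [HahnSeries.single_zero_one]
  rw [hinv, HahnSeries.single_pow]
  rw [HahnSeries.C_apply, HahnSeries.single_mul_single]
  simp

lemma residue_term (γ ζ ξ : ℂ) (m : ℕ) (hm : 0 < m) :
    residue ξ (RatFunc.C γ * ((algebraMap ℂ[X] (RatFunc ℂ) (X - C ζ))⁻¹) ^ m)
      = if ξ = ζ ∧ m = 1 then γ else 0 := by
  classical
  by_cases hξ : ξ = ζ
  · subst hξ
    rw [residue_def', laurent_term, coe_term, HahnSeries.coeff_single]
    by_cases hm1 : m = 1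
    · subst hm1; norm_num
    · have : ¬ ((-1 : ℤ) = -(m : ℤ)) := by omega
      simp [this, hm1]
  · have : RatFunc.C γ * ((algebraMap ℂ[X] (RatFunc ℂ) (X - C ζ))⁻¹) ^ m
        = algebraMap ℂ[X] (RatFunc ℂ) (C γ) / algebraMap ℂ[X] (RatFunc ℂ) ((X - C ζ) ^ m) := by
      rw [RatFunc.algebraMap_C, map_pow, div_eq_mul_inv, inv_pow]
    rw [this, residue_eq_zero_of_eval_ne]
    · simp [hξ]
    · simp only [Polynomial.eval_pow, Polynomial.eval_sub, Polynomial.eval_X, Polynomial.eval_C]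
      exact pow_ne_zero _ (sub_ne_zero_of_ne hξ)

lemma totRes_term (γ ζ : ℂ) (m : ℕ) (hm : 0 < m) (hζ : IsRootOfUnity ζ) :
    totRes (RatFunc.C γ * ((algebraMap ℂ[X] (RatFunc ℂ) (X - C ζ))⁻¹) ^ m)
      = if m = 1 then γ else 0 := by
  classical
  unfold totRes
  rw [finsum_mem_def]
  rw [finsum_eq_single _ ζ]
  · rw [Set.indicator_apply]
    simp only [Set.mem_setOf_eq, hζ, if_true]
    rw [residue_term _ _ _ _ hm]
    simp
  · intro x hx
    rw [Set.indicator_apply]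
    by_cases hmem : x ∈ {z : ℂ | IsRootOfUnity z}
    · simp only [hmem, if_true]
      rw [residue_term _ _ _ _ hm]
      simp [hx]
    · simp [hmem]

/-! ### Main induction: total residue of a proper fraction with poles at roots of unity -/

lemma totRes_main : ∀ (n : ℕ) (a b : ℂ[X]), b.natDegree ≤ n →
    (∀ ζ : ℂ, b.IsRoot ζ → IsRootOfUnity ζ) → a.degree < b.degree →
    totRes (algebraMap ℂ[X] (RatFunc ℂ) a / algebraMap ℂ[X] (RatFunc ℂ) b)
      = a.coeff (b.natDegree - 1) / b.leadingCoeff := by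
  intro n
  induction n with
  | zero =>
    intro a b hbn hroots hdeg
    have hb0 : b ≠ 0 := fun h => by simp [h] at hdeg
    have hbdeg : b.degree = 0 := by
      rw [Polynomial.degree_eq_natDegree hb0]; exact_mod_cast Nat.le_zero.mp hbn
    have ha : a = 0 := by
      by_contra ha
      have h1 := Polynomial.zero_le_degree_iff.mpr ha
      rw [hbdeg] at hdeg
      exact absurd (lt_of_le_of_lt h1 hdeg) (lt_irrefl _)
    subst ha
    simp [totRes_zero]
  | succ n IH =>
    intro a b hbn hroots hdeg
    by_cases hble : b.natDegree ≤ n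
    · exact IH a b hble hroots hdeg
    have hb0 : b ≠ 0 := fun h => by simp [h] at hdeg
    have hN : b.natDegree = n + 1 := by omega
    by_cases ha0 : a = 0
    · subst ha0; simp [totRes_zero]
    obtain ⟨ζ, hζ⟩ := Complex.exists_root (f := b)
      (by rw [Polynomial.degree_eq_natDegree hb0, hN]; exact_mod_cast Nat.succ_pos n)
    obtain ⟨c, hbc, hcnd⟩ := Polynomial.exists_eq_pow_rootMultiplicity_mul_and_not_dvd b hb0 ζ
    set m := Polynomial.rootMultiplicity ζ b with hm_def
    have hm : 0 < m := (Polynomial.rootMultiplicity_pos hb0).mpr hζ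
    have hcζ : c.eval ζ ≠ 0 := fun h => hcnd (Polynomial.dvd_iff_isRoot.mpr h)
    have hc0 : c ≠ 0 := fun h => by simp [h] at hcζ
    set γ := a.eval ζ / c.eval ζ with hγ
    have hrootd : (a - C γ * c).IsRoot ζ := by
      simp only [Polynomial.IsRoot, Polynomial.eval_sub, Polynomial.eval_mul, Polynomial.eval_C, hγ]
      field_simp
      ring
    obtain ⟨d, hdd⟩ := Polynomial.dvd_iff_isRoot.mpr hrootd
    set b₂ := (X - C ζ) ^ (m - 1) * c with hb₂def
    have hbb2 : b = (X - C ζ) * b₂ := by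
      conv_lhs => rw [hbc, show m = (m-1)+1 from by omega, pow_succ]
      rw [hb₂def]; ring
    have hb₂0 : b₂ ≠ 0 := mul_ne_zero (pow_ne_zero _ (Polynomial.X_sub_C_ne_zero ζ)) hc0
    have hNb : b.natDegree = m + c.natDegree := by
      rw [hbc, Polynomial.natDegree_mul (pow_ne_zero _ (Polynomial.X_sub_C_ne_zero ζ)) hc0,
        Polynomial.natDegree_pow, Polynomial.natDegree_X_sub_C, mul_one]
    have hNb2 : b₂.natDegree = (m - 1) + c.natDegree := by
      rw [hb₂def, Polynomial.natDegree_mul (pow_ne_zero _ (Polynomial.X_sub_C_ne_zero ζ)) hc0,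
        Polynomial.natDegree_pow, Polynomial.natDegree_X_sub_C, mul_one]
    have hmN : m ≤ n + 1 := by omega
    have hNb2' : b₂.natDegree = n := by omega
    have hasplit : a = C γ * c + (X - C ζ) * d := by rw [← hdd]; ring
    -- degree bookkeeping
    have hna : a.natDegree ≤ n := by
      have := Polynomial.natDegree_lt_natDegree ha0 hdeg
      omega
    have hnc : c.natDegree ≤ n := by omega
    have hamc : (a - C γ * c).natDegree ≤ n := by
      refine le_trans (Polynomial.natDegree_sub_le _ _) ?_
      exact max_le hna (le_trans (Polynomial.natDegree_C_mul_le _ _) hnc)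
    have hd_deg : d = 0 ∨ (d ≠ 0 ∧ d.natDegree + 1 ≤ n) := by
      by_cases hd0 : d = 0
      · exact Or.inl hd0
      · refine Or.inr ⟨hd0, ?_⟩
        have h1 : (a - C γ * c).natDegree = 1 + d.natDegree := by
          rw [hdd, Polynomial.natDegree_mul (Polynomial.X_sub_C_ne_zero ζ) hd0,
            Polynomial.natDegree_X_sub_C]
        omega
    have hdeg2 : d.degree < b₂.degree := by
      rcases hd_deg with hd0 | ⟨hd0, hdn⟩
      · rw [hd0, Polynomial.degree_zero]
        exact Ne.bot_lt (fun h => hb₂0 (Polynomial.degree_eq_bot.mp h))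
      · apply Polynomial.degree_lt_degree
        omega
    -- the splitting identity in RatFunc
    have hsplit : algebraMap ℂ[X] (RatFunc ℂ) a / algebraMap ℂ[X] (RatFunc ℂ) b
        = RatFunc.C γ * ((algebraMap ℂ[X] (RatFunc ℂ) (X - C ζ))⁻¹) ^ m
          + algebraMap ℂ[X] (RatFunc ℂ) d / algebraMap ℂ[X] (RatFunc ℂ) b₂ := by
      have hXζ : algebraMap ℂ[X] (RatFunc ℂ) (X - C ζ) ≠ 0 :=
        RatFunc.algebraMap_ne_zero (Polynomial.X_sub_C_ne_zero ζ)
      have hcne : algebraMap ℂ[X] (RatFunc ℂ) c ≠ 0 := RatFunc.algebraMap_ne_zero hc0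
      have e1 : algebraMap ℂ[X] (RatFunc ℂ) a
          = RatFunc.C γ * algebraMap ℂ[X] (RatFunc ℂ) c
            + algebraMap ℂ[X] (RatFunc ℂ) (X - C ζ) * algebraMap ℂ[X] (RatFunc ℂ) d := by
        rw [← RatFunc.algebraMap_C γ, ← map_mul, ← map_mul, ← map_add, ← hasplit]
      have e2 : algebraMap ℂ[X] (RatFunc ℂ) b
          = algebraMap ℂ[X] (RatFunc ℂ) (X - C ζ) ^ m * algebraMap ℂ[X] (RatFunc ℂ) c := by
        rw [hbc, map_mul, map_pow]
      have e3 : algebraMap ℂ[X] (RatFunc ℂ) b₂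
          = algebraMap ℂ[X] (RatFunc ℂ) (X - C ζ) ^ (m-1) * algebraMap ℂ[X] (RatFunc ℂ) c := by
        rw [hb₂def, map_mul, map_pow]
      have epow : algebraMap ℂ[X] (RatFunc ℂ) (X - C ζ) ^ m
          = algebraMap ℂ[X] (RatFunc ℂ) (X - C ζ)
            * algebraMap ℂ[X] (RatFunc ℂ) (X - C ζ) ^ (m-1) := by
        conv_lhs => rw [show m = (m-1)+1 from by omega, pow_succ]
        ring
      rw [e1, e2, add_div]
      congr 1
      · rw [mul_div_mul_right _ _ hcne, div_eq_mul_inv, inv_pow]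
      · rw [e3, epow, mul_assoc]
        exact mul_div_mul_left _ _ hXζ
    rw [hsplit, totRes_add, totRes_term γ ζ m hm (hroots ζ hζ),
      IH d b₂ (le_of_eq hNb2') (fun ξ hξ2 => hroots ξ (by
        rw [Polynomial.IsRoot, hbb2, Polynomial.eval_mul, hξ2.eq_zero, mul_zero])) hdeg2]
    -- final coefficient bookkeeping
    have hlc : b.leadingCoeff = c.leadingCoeff := by
      rw [hbc, Polynomial.leadingCoeff_mul, Polynomial.Monic.leadingCoeff
        ((Polynomial.monic_X_sub_C ζ).pow m), one_mul]
    have hlc2 : b₂.leadingCoeff = c.leadingCoeff := by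
      rw [hb₂def, Polynomial.leadingCoeff_mul, Polynomial.Monic.leadingCoeff
        ((Polynomial.monic_X_sub_C ζ).pow (m-1)), one_mul]
    have hlc0 : c.leadingCoeff ≠ 0 := Polynomial.leadingCoeff_ne_zero.mpr hc0
    have hcoeff : a.coeff n = γ * c.coeff n + ((X - C ζ) * d).coeff n := by
      conv_lhs => rw [hasplit]
      rw [Polynomial.coeff_add, Polynomial.coeff_C_mul]
    have hXd : ((X - C ζ) * d).coeff n = d.coeff (n - 1) - ζ * d.coeff n := by
      rw [sub_mul, Polynomial.coeff_sub, Polynomial.coeff_C_mul]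
      congr 1
      rcases hd_deg with hd0 | ⟨hd0, hdn⟩
      · simp [hd0]
      · have hn1 : n = (n-1)+1 := by omega
        conv_lhs => rw [hn1]
        rw [Polynomial.coeff_X_mul]
    have hdn : d.coeff n = 0 := by
      rcases hd_deg with hd0 | ⟨hd0, hdn⟩
      · simp [hd0]
      · exact Polynomial.coeff_eq_zero_of_natDegree_lt (by omega)
    have hcn : c.coeff n = if m = 1 then c.leadingCoeff else 0 := by
      by_cases hm1 : m = 1
      · rw [if_pos hm1]
        have : c.natDegree = n := by omega
        rw [← this, Polynomial.coeff_natDegree]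
      · rw [if_neg hm1]
        exact Polynomial.coeff_eq_zero_of_natDegree_lt (by omega)
    rw [hN, hNb2', hlc, hlc2]
    simp only [Nat.add_sub_cancel]
    rw [hcoeff, hXd, hdn, hcn]
    by_cases hm1 : m = 1 <;> simp only [hm1, if_pos, if_neg, if_true, if_false] <;> field_simp <;> ring

/-! ### Reflection and the automorphism `σ` -/

lemma aeval_X_eq (p : ℂ[X]) :
    aeval (RatFunc.X : RatFunc ℂ) p = algebraMap ℂ[X] (RatFunc ℂ) p := by
  induction p using Polynomial.induction_on' with
  | add p q hp hq => rw [map_add, map_add, hp, hq]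
  | monomial nn cc =>
    rw [← Polynomial.C_mul_X_pow_eq_monomial, map_mul, map_mul, map_pow, map_pow,
      Polynomial.aeval_C, Polynomial.aeval_X, RatFunc.algebraMap_C, RatFunc.algebraMap_X,
      RatFunc.algebraMap_eq_C]

lemma sigma_alg (σ : RatFunc ℂ ≃ₐ[ℂ] RatFunc ℂ)
    (hσ : σ RatFunc.X = (RatFunc.X : RatFunc ℂ)⁻¹) (p : ℂ[X]) :
    σ (algebraMap ℂ[X] (RatFunc ℂ) p) = aeval ((RatFunc.X : RatFunc ℂ)⁻¹) p := by
  induction p using Polynomial.induction_on' with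
  | add p q hp hq => rw [map_add, map_add, map_add, hp, hq]
  | monomial nn cc =>
    rw [← Polynomial.C_mul_X_pow_eq_monomial]
    rw [show (aeval ((RatFunc.X : RatFunc ℂ)⁻¹)) (C cc * X ^ nn)
        = RatFunc.C cc * ((RatFunc.X : RatFunc ℂ)⁻¹) ^ nn by
      rw [map_mul, map_pow, Polynomial.aeval_C, Polynomial.aeval_X, RatFunc.algebraMap_eq_C]]
    rw [map_mul, map_pow, RatFunc.algebraMap_C, RatFunc.algebraMap_X, map_mul, map_pow, hσ]
    congr 1
    rw [← RatFunc.algebraMap_eq_C]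
    exact σ.commutes cc

lemma natDegree_reflect_le (p : ℂ[X]) (nn : ℕ) (hp : p.natDegree ≤ nn) :
    (reflect nn p).natDegree ≤ nn := by
  apply Polynomial.natDegree_le_iff_coeff_eq_zero.mpr
  intro i hi
  rw [Polynomial.coeff_reflect, Polynomial.revAt_eq_self_of_lt hi]
  exact Polynomial.coeff_eq_zero_of_natDegree_lt (lt_of_le_of_lt hp hi)

lemma reflect_key (p : ℂ[X]) (nn : ℕ) (hp : p.natDegree ≤ nn) :
    aeval ((RatFunc.X : RatFunc ℂ)⁻¹) p * (RatFunc.X : RatFunc ℂ) ^ nn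
      = algebraMap ℂ[X] (RatFunc ℂ) (reflect nn p) := by
  have hinv : Invertible (RatFunc.X : RatFunc ℂ) := invertibleOfNonzero RatFunc.X_ne_zero
  have hrr : reflect nn (reflect nn p) = p := by
    ext i; rw [Polynomial.coeff_reflect, Polynomial.coeff_reflect, Polynomial.revAt_invol]
  have h := Polynomial.eval₂_reflect_mul_pow (algebraMap ℂ (RatFunc ℂ)) RatFunc.X nn
    (reflect nn p) (natDegree_reflect_le p nn hp)
  rw [hrr] at h
  conv_rhs => rw [← aeval_X_eq, Polynomial.aeval_def, ← h]
  rw [invOf_eq_inv, ← Polynomial.aeval_def]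

lemma isRootOfUnity_of_reflect_root (b : ℂ[X]) (hb0 : b ≠ 0)
    (hroots : ∀ ζ : ℂ, b.IsRoot ζ → IsRootOfUnity ζ) (ξ : ℂ)
    (hξ : (reflect b.natDegree b).IsRoot ξ) : IsRootOfUnity ξ := by
  have hb00 : b.eval 0 ≠ 0 := by
    intro h0
    obtain ⟨k, hk, h1⟩ := hroots 0 h0
    rw [zero_pow hk.ne'] at h1
    exact zero_ne_one h1
  have hξ0 : ξ ≠ 0 := by
    intro h0
    rw [h0] at hξ
    have h2 : (reflect b.natDegree b).coeff 0 = 0 := by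
      rwa [Polynomial.coeff_zero_eq_eval_zero]
    rw [Polynomial.coeff_reflect, Polynomial.revAt_zero, Polynomial.coeff_natDegree] at h2
    exact Polynomial.leadingCoeff_ne_zero.mpr hb0 h2
  have hinv : Invertible (ξ⁻¹ : ℂ) := invertibleOfNonzero (inv_ne_zero hξ0)
  have h := Polynomial.eval₂_reflect_mul_pow (RingHom.id ℂ) (ξ⁻¹) b.natDegree b le_rfl
  have hroot2 : b.eval ξ⁻¹ = 0 := by
    have h2 : Polynomial.eval₂ (RingHom.id ℂ) (⅟ (ξ⁻¹ : ℂ)) (reflect b.natDegree b) = 0 := by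
      rw [invOf_eq_inv, inv_inv]
      rw [show Polynomial.eval₂ (RingHom.id ℂ) ξ (reflect b.natDegree b)
          = (reflect b.natDegree b).eval ξ from rfl]
      exact hξ
    rw [h2, zero_mul] at h
    have h3 := h.symm
    rw [show Polynomial.eval₂ (RingHom.id ℂ) (ξ⁻¹ : ℂ) b = b.eval ξ⁻¹ from rfl] at h3
    exact h3
  obtain ⟨k, hk, h1⟩ := hroots ξ⁻¹ hroot2
  refine ⟨k, hk, ?_⟩
  rw [inv_pow, inv_eq_one] at h1
  exact h1

end OmegaAux

/-- If `f, g ∈ ℂ(q)` are both zero or reduced rational functions with poles only at roots of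
unity, then the sum of the residues of `σ(f)·g·q⁻¹` over all roots of unity vanishes:
the subspace `𝒦₋` is isotropic for the residue pairing `ω`. -/
theorem omega_vanishes_on_reduced (σ : RatFunc ℂ ≃ₐ[ℂ] RatFunc ℂ)
    (hσ : σ RatFunc.X = (RatFunc.X : RatFunc ℂ)⁻¹)
    (f g : RatFunc ℂ) (hf : ReducedPolesOnlyAtRootsOfUnity f)
    (hg : ReducedPolesOnlyAtRootsOfUnity g) :
    omegaPair σ f g = 0 := by
  classical
  obtain ⟨af, bf, hdegf, hrootsf, hfeq⟩ := hf
  obtain ⟨ag, bg, hdegg, hrootsg, hgeq⟩ := hg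
  have hbf0 : bf ≠ 0 := fun h => by simp [h] at hdegf
  have hbg0 : bg ≠ 0 := fun h => by simp [h] at hdegg
  set nf := bf.natDegree with hnf
  set ra := reflect nf af with hra
  set rb := reflect nf bf with hrbdef
  have hbf00 : bf.eval 0 ≠ 0 := by
    intro h0
    obtain ⟨k, hk, h1⟩ := hrootsf 0 h0
    rw [zero_pow hk.ne'] at h1
    exact zero_ne_one h1
  have hrb0 : rb ≠ 0 := by
    rw [hrbdef]
    exact fun h => hbf0 (Polynomial.reflect_eq_zero_iff.mp h)
  have hnaf : af.natDegree ≤ nf := by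
    by_cases haf : af = 0
    · simp [haf]
    · exact le_of_lt (Polynomial.natDegree_lt_natDegree haf hdegf)
  have hra0coeff : ra.coeff 0 = 0 := by
    rw [hra, Polynomial.coeff_reflect, Polynomial.revAt_zero]
    apply Polynomial.coeff_eq_zero_of_degree_lt
    calc af.degree < bf.degree := hdegf
    _ ≤ (nf : WithBot ℕ) := Polynomial.degree_le_natDegree
  obtain ⟨A1, hA1⟩ := Polynomial.X_dvd_iff.mpr hra0coeff
  have hrbn : rb.natDegree = nf := by
    apply le_antisymm (OmegaAux.natDegree_reflect_le bf nf le_rfl)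
    apply Polynomial.le_natDegree_of_ne_zero
    rw [Polynomial.coeff_reflect, Polynomial.revAt_le (le_refl nf), Nat.sub_self,
      Polynomial.coeff_zero_eq_eval_zero]
    exact hbf00
  have hσf : σ f = algebraMap ℂ[X] (RatFunc ℂ) ra / algebraMap ℂ[X] (RatFunc ℂ) rb := by
    rw [hfeq, map_div₀, OmegaAux.sigma_alg σ hσ, OmegaAux.sigma_alg σ hσ]
    rw [hra, hrbdef, ← OmegaAux.reflect_key af nf hnaf, ← OmegaAux.reflect_key bf nf le_rfl,
      mul_div_mul_right _ _ (pow_ne_zero nf RatFunc.X_ne_zero)]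
  set B := rb * bg with hB
  set A := A1 * ag with hA
  have hB0 : B ≠ 0 := mul_ne_zero hrb0 hbg0
  have hkey : σ f * g * (RatFunc.X : RatFunc ℂ)⁻¹
      = algebraMap ℂ[X] (RatFunc ℂ) A / algebraMap ℂ[X] (RatFunc ℂ) B := by
    rw [hσf, hgeq, hA, hB, map_mul, map_mul]
    have h1 : algebraMap ℂ[X] (RatFunc ℂ) ra = RatFunc.X * algebraMap ℂ[X] (RatFunc ℂ) A1 := by
      rw [hA1, map_mul, RatFunc.algebraMap_X]
    rw [h1, div_mul_div_comm, ← div_eq_mul_inv, div_div]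
    rw [show RatFunc.X * algebraMap ℂ[X] (RatFunc ℂ) A1 * algebraMap ℂ[X] (RatFunc ℂ) ag
        = algebraMap ℂ[X] (RatFunc ℂ) A1 * algebraMap ℂ[X] (RatFunc ℂ) ag * RatFunc.X by ring]
    exact mul_div_mul_right _ _ RatFunc.X_ne_zero
  have hrootsB : ∀ ζ : ℂ, B.IsRoot ζ → IsRootOfUnity ζ := by
    intro ξ hξ
    rw [hB, Polynomial.IsRoot, Polynomial.eval_mul, mul_eq_zero] at hξ
    rcases hξ with h | h
    · exact OmegaAux.isRootOfUnity_of_reflect_root bf hbf0 hrootsf ξ h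
    · exact hrootsg ξ h
  have hBn : B.natDegree = nf + bg.natDegree := by
    rw [hB, Polynomial.natDegree_mul hrb0 hbg0, hrbn]
  have hAdeg : A.degree < ((B.natDegree - 1 : ℕ) : WithBot ℕ) := by
    by_cases hA10 : A1 = 0
    · rw [hA, hA10, zero_mul, Polynomial.degree_zero]; exact WithBot.bot_lt_coe _
    by_cases hag0 : ag = 0
    · rw [hA, hag0, mul_zero, Polynomial.degree_zero]; exact WithBot.bot_lt_coe _
    have haf0 : af ≠ 0 := by
      intro h
      apply hA10
      have hz : ra = 0 := by rw [hra, h, Polynomial.reflect_zero]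
      rw [hz] at hA1
      rcases mul_eq_zero.mp hA1.symm with h' | h'
      · exact absurd h' Polynomial.X_ne_zero
      · exact h'
    have hnf1 : 1 ≤ nf := by
      have := Polynomial.natDegree_lt_natDegree haf0 hdegf
      omega
    have hraA : ra.natDegree = 1 + A1.natDegree := by
      rw [hA1, Polynomial.natDegree_mul Polynomial.X_ne_zero hA10, Polynomial.natDegree_X]
    have hA1n : A1.natDegree ≤ nf - 1 := by
      have := OmegaAux.natDegree_reflect_le af nf hnaf
      rw [← hra] at this
      omega
    have hagn : ag.natDegree < bg.natDegree := Polynomial.natDegree_lt_natDegree hag0 hdegg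
    rw [hA, Polynomial.degree_eq_natDegree (mul_ne_zero hA10 hag0),
      Polynomial.natDegree_mul hA10 hag0]
    exact_mod_cast (by omega : A1.natDegree + ag.natDegree < B.natDegree - 1)
  have hdegAB : A.degree < B.degree := by
    apply lt_of_lt_of_le hAdeg
    rw [Polynomial.degree_eq_natDegree hB0]
    exact_mod_cast (by omega : B.natDegree - 1 ≤ B.natDegree)
  have hdef : omegaPair (⇑σ) f g = OmegaAux.totRes (σ f * g * (RatFunc.X : RatFunc ℂ)⁻¹) := rfl
  rw [hdef, hkey, OmegaAux.totRes_main B.natDegree A B le_rfl hrootsB hdegAB,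
    Polynomial.coeff_eq_zero_of_degree_lt hAdeg, zero_div]
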